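/- If λ is a dominant weight of SU(n), n ≥ 3, with Casimir eigenvalue Cas_λ < 1 (with respect to the negative Killing form inner product), then λ ∈ {0, ω_1, ω_{n−1}, ω_2, ω_{n−2}} ∪ ({ω_3, ω_{n−3}} if n ∈ {6,7}). -/

import Mathlib

/-- The fundamental weight `ω_r` of `SU(n)`, realized in the standard way inside `ℝⁿ`. -/
noncomputable def suFundWeight (n r : ℕ) : EuclideanSpace ℝ (Fin n) :=
  WithLp.toLp 2 (fun i => if (i : ℕ) < r then 1 - (r : ℝ) / n else -((r : ℝ) / n))

/-- The half-sum `δ` of the positive roots of `su(n)`: `δ_i = (n + 1)/2 − i`. -/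
noncomputable def suHalfSumPosRoots (n : ℕ) : EuclideanSpace ℝ (Fin n) :=
  WithLp.toLp 2 (fun i => ((n : ℝ) + 1) / 2 - ((i : ℕ) + 1))

/-- Freudenthal's formula `Cas_λ = ⟨λ, λ + 2δ⟩` for the negative Killing form inner
product of `su(n)`. -/
noncomputable def suCasimir (n : ℕ) (lam : EuclideanSpace ℝ (Fin n)) : ℝ :=
  (1 / (2 * (n : ℝ))) * inner ℝ lam (lam + (2 : ℝ) • suHalfSumPosRoots n)

section Aux

lemma suAux_sum_range_real (k : ℕ) : ∑ i ∈ Finset.range k, (i : ℝ) = k * (k - 1) / 2 := by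
  induction k with
  | zero => simp
  | succ k ih => rw [Finset.sum_range_succ, ih]; push_cast; ring

lemma suAux_inner_w_w (n r s : ℕ) (hn : 0 < n) (hrs : r ≤ s) (hs : s ≤ n) :
    (inner ℝ (suFundWeight n r) (suFundWeight n s) : ℝ) = r * ((n:ℝ) - s) / n := by
  have hexp : (inner ℝ (suFundWeight n r) (suFundWeight n s) : ℝ)
      = ∑ i ∈ Finset.range n,
        (if i < r then 1 - (r : ℝ) / n else -((r : ℝ) / n)) *
        (if i < s then 1 - (s : ℝ) / n else -((s : ℝ) / n)) := by
    rw [PiLp.inner_apply, ← Fin.sum_univ_eq_sum_range]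
    simp [suFundWeight]
    refine Finset.sum_congr rfl fun i _ => ?_
    split_ifs <;> ring
  rw [hexp, ← Finset.sum_range_add_sum_Ico _ (le_trans hrs hs),
    ← Finset.sum_Ico_consecutive _ hrs hs]
  have e1 : ∑ i ∈ Finset.range r,
      (if i < r then 1 - (r : ℝ) / n else -((r : ℝ) / n)) *
      (if i < s then 1 - (s : ℝ) / n else -((s : ℝ) / n))
      = r * ((1 - (r : ℝ) / n) * (1 - (s : ℝ) / n)) := by
    rw [Finset.sum_congr rfl (fun i hi => ?_), Finset.sum_const, Finset.card_range,
      nsmul_eq_mul]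
    rw [Finset.mem_range] at hi
    rw [if_pos hi, if_pos (lt_of_lt_of_le hi hrs)]
  have e2 : ∑ i ∈ Finset.Ico r s,
      (if i < r then 1 - (r : ℝ) / n else -((r : ℝ) / n)) *
      (if i < s then 1 - (s : ℝ) / n else -((s : ℝ) / n))
      = ((s : ℝ) - r) * (-((r : ℝ) / n) * (1 - (s : ℝ) / n)) := by
    rw [Finset.sum_congr rfl (fun i hi => ?_), Finset.sum_const, Nat.card_Ico,
      nsmul_eq_mul, Nat.cast_sub hrs]
    rw [Finset.mem_Ico] at hi
    rw [if_neg (not_lt.2 hi.1), if_pos hi.2]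
  have e3 : ∑ i ∈ Finset.Ico s n,
      (if i < r then 1 - (r : ℝ) / n else -((r : ℝ) / n)) *
      (if i < s then 1 - (s : ℝ) / n else -((s : ℝ) / n))
      = ((n : ℝ) - s) * (-((r : ℝ) / n) * -((s : ℝ) / n)) := by
    rw [Finset.sum_congr rfl (fun i hi => ?_), Finset.sum_const, Nat.card_Ico,
      nsmul_eq_mul, Nat.cast_sub hs]
    rw [Finset.mem_Ico] at hi
    rw [if_neg (not_lt.2 (le_trans hrs hi.1)), if_neg (not_lt.2 hi.1)]
  rw [e1, e2, e3]
  have hn' : (n : ℝ) ≠ 0 := Nat.cast_ne_zero.2 hn.ne'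
  field_simp
  ring

lemma suAux_inner_w_d (n r : ℕ) (hn : 0 < n) (hr : r ≤ n) :
    (inner ℝ (suFundWeight n r) (suHalfSumPosRoots n) : ℝ) = r * ((n:ℝ) - r) / 2 := by
  have hexp : (inner ℝ (suFundWeight n r) (suHalfSumPosRoots n) : ℝ)
      = ∑ i ∈ Finset.range n,
        (if i < r then 1 - (r : ℝ) / n else -((r : ℝ) / n)) *
        (((n : ℝ) + 1) / 2 - ((i : ℕ) + 1)) := by
    rw [PiLp.inner_apply, ← Fin.sum_univ_eq_sum_range]
    simp [suFundWeight, suHalfSumPosRoots]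
    refine Finset.sum_congr rfl fun i _ => ?_
    split_ifs <;> ring
  have key : ∀ k : ℕ, k ≤ n → ∑ i ∈ Finset.range k, (((n : ℝ) + 1) / 2 - ((i : ℕ) + 1))
      = k * ((n:ℝ) - k) / 2 := by
    intro k hk
    rw [Finset.sum_sub_distrib, Finset.sum_const, Finset.sum_add_distrib, suAux_sum_range_real,
      Finset.sum_const, Finset.card_range, nsmul_eq_mul, nsmul_eq_mul]
    ring
  rw [hexp, ← Finset.sum_range_add_sum_Ico _ hr]
  have e1 : ∑ i ∈ Finset.range r,
      (if i < r then 1 - (r : ℝ) / n else -((r : ℝ) / n)) * (((n : ℝ) + 1) / 2 - ((i : ℕ) + 1))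
      = (1 - (r : ℝ) / n) * (r * ((n:ℝ) - r) / 2) := by
    rw [Finset.sum_congr rfl (fun i hi => ?_), ← Finset.mul_sum, key r hr]
    rw [Finset.mem_range] at hi
    rw [if_pos hi]
  have e2 : ∑ i ∈ Finset.Ico r n,
      (if i < r then 1 - (r : ℝ) / n else -((r : ℝ) / n)) * (((n : ℝ) + 1) / 2 - ((i : ℕ) + 1))
      = -((r : ℝ) / n) * (n * ((n:ℝ) - n) / 2 - r * ((n:ℝ) - r) / 2) := by
    rw [Finset.sum_congr rfl (fun i hi => ?_), ← Finset.mul_sum,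
      Finset.sum_Ico_eq_sub _ hr, key n le_rfl, key r hr]
    rw [Finset.mem_Ico] at hi
    rw [if_neg (not_lt.2 hi.1)]
  rw [e1, e2]
  have hn' : (n : ℝ) ≠ 0 := Nat.cast_ne_zero.2 hn.ne'
  field_simp
  ring

lemma suAux_cas_expand (n : ℕ) (x : EuclideanSpace ℝ (Fin n)) :
    suCasimir n x = (1 / (2 * (n : ℝ))) *
      ((inner ℝ x x : ℝ) + 2 * (inner ℝ x (suHalfSumPosRoots n) : ℝ)) := by
  rw [suCasimir, inner_add_right, real_inner_smul_right]

lemma suAux_cas_w (n r : ℕ) (hn : 0 < n) (hr : r ≤ n) :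
    suCasimir n (suFundWeight n r)
      = ((n:ℝ) + 1) * r * ((n:ℝ) - r) / (2 * (n:ℝ)^2) := by
  rw [suAux_cas_expand, suAux_inner_w_w n r r hn le_rfl hr, suAux_inner_w_d n r hn hr]
  have hn' : (n : ℝ) ≠ 0 := Nat.cast_ne_zero.2 hn.ne'
  field_simp
  ring

lemma suAux_cas_add (n : ℕ) (x y : EuclideanSpace ℝ (Fin n)) :
    suCasimir n (x + y) = suCasimir n x + suCasimir n y + (inner ℝ x y : ℝ) / n := by
  rw [suAux_cas_expand, suAux_cas_expand, suAux_cas_expand, inner_add_left, inner_add_left,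
    inner_add_right, inner_add_right, real_inner_comm y x]
  by_cases hn : (n : ℝ) = 0
  · simp [hn]
  · field_simp
    ring

lemma suAux_inner_w_w_nonneg (n r s : ℕ) (hn : 0 < n) (hr : r ≤ n) (hs : s ≤ n) :
    0 ≤ (inner ℝ (suFundWeight n r) (suFundWeight n s) : ℝ) := by
  rcases le_total r s with hrs | hrs
  · rw [suAux_inner_w_w n r s hn hrs hs]
    have : (s:ℝ) ≤ n := by exact_mod_cast hs
    exact div_nonneg (mul_nonneg (Nat.cast_nonneg r) (sub_nonneg.2 this)) (Nat.cast_nonneg n)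
  · rw [real_inner_comm, suAux_inner_w_w n s r hn hrs hr]
    have : (r:ℝ) ≤ n := by exact_mod_cast hr
    exact div_nonneg (mul_nonneg (Nat.cast_nonneg s) (sub_nonneg.2 this)) (Nat.cast_nonneg n)

lemma suAux_inner_w_sum_nonneg (n : ℕ) (hn : 0 < n) (c : ℕ → ℕ) (r : ℕ) (hr : r ≤ n) :
    0 ≤ (inner ℝ (suFundWeight n r)
      (∑ t ∈ Finset.Icc 1 (n-1), c t • suFundWeight n t) : ℝ) := by
  rw [inner_sum]
  refine Finset.sum_nonneg fun t ht => ?_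
  rw [← Nat.cast_smul_eq_nsmul ℝ, real_inner_smul_right]
  have ht' : t ≤ n := by
    have := (Finset.mem_Icc.1 ht).2; omega
  exact mul_nonneg (Nat.cast_nonneg _) (suAux_inner_w_w_nonneg n r t hn hr ht')

lemma suAux_inner_sum_d_nonneg (n : ℕ) (hn : 0 < n) (c : ℕ → ℕ) :
    0 ≤ (inner ℝ (∑ t ∈ Finset.Icc 1 (n-1), c t • suFundWeight n t)
      (suHalfSumPosRoots n) : ℝ) := by
  rw [sum_inner]
  refine Finset.sum_nonneg fun t ht => ?_
  rw [← Nat.cast_smul_eq_nsmul ℝ, real_inner_smul_left]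
  have ht' : t ≤ n := by
    have := (Finset.mem_Icc.1 ht).2; omega
  rw [suAux_inner_w_d n t hn ht']
  have : (t:ℝ) ≤ n := by exact_mod_cast ht'
  have h2 : (0:ℝ) ≤ t * ((n:ℝ) - t) / 2 :=
    div_nonneg (mul_nonneg (Nat.cast_nonneg t) (sub_nonneg.2 this)) (by norm_num)
  exact mul_nonneg (Nat.cast_nonneg _) h2

lemma suAux_cas_sum_nonneg (n : ℕ) (hn : 0 < n) (c : ℕ → ℕ) :
    0 ≤ suCasimir n (∑ t ∈ Finset.Icc 1 (n-1), c t • suFundWeight n t) := by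
  rw [suAux_cas_expand]
  have h1 : (0:ℝ) ≤ 1 / (2 * (n:ℝ)) := by positivity
  refine mul_nonneg h1 (add_nonneg real_inner_self_nonneg ?_)
  have := suAux_inner_sum_d_nonneg n hn c
  linarith

lemma suAux_pair_bound (n r s : ℕ) (hn : 3 ≤ n) (hr : 1 ≤ r) (hrs : r ≤ s) (hs : s ≤ n - 1) :
    (1:ℝ) ≤ suCasimir n (suFundWeight n r) + suCasimir n (suFundWeight n s)
      + (inner ℝ (suFundWeight n r) (suFundWeight n s) : ℝ) / n := by
  have hn0 : 0 < n := by omega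
  have hsn : s ≤ n := by omega
  have hrn : r ≤ n := le_trans hrs hsn
  rw [suAux_cas_w n r hn0 hrn, suAux_cas_w n s hn0 hsn, suAux_inner_w_w n r s hn0 hrs hsn]
  have hnR : (3:ℝ) ≤ n := by exact_mod_cast hn
  have hrR : (1:ℝ) ≤ r := by exact_mod_cast hr
  have hrsR : (r:ℝ) ≤ s := by exact_mod_cast hrs
  have hsR : (s:ℝ) ≤ (n:ℝ) - 1 := by
    have : (s:ℝ) + 1 ≤ n := by exact_mod_cast Nat.add_le_of_le_sub (by omega) hs
    linarith
  have p1 : (0:ℝ) ≤ ((r:ℝ) - 1) * (((n:ℝ) - 1) - r) := by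
    apply mul_nonneg <;> linarith
  have p2 : (0:ℝ) ≤ ((s:ℝ) - 1) * (((n:ℝ) - 1) - s) := by
    apply mul_nonneg <;> linarith
  have p3 : (0:ℝ) ≤ ((r:ℝ) - 1) * (((n:ℝ) - s) - 1) := by
    apply mul_nonneg <;> linarith
  have key : 2*(n:ℝ)^2 ≤ ((n:ℝ)+1)*r*((n:ℝ)-r) + ((n:ℝ)+1)*s*((n:ℝ)-s)
      + 2*(r:ℝ)*((n:ℝ)-s) := by nlinarith [p1, p2, p3]
  have eq : ((n:ℝ) + 1) * r * ((n:ℝ) - r) / (2 * (n:ℝ)^2)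
      + ((n:ℝ) + 1) * s * ((n:ℝ) - s) / (2 * (n:ℝ)^2)
      + ((r:ℝ) * ((n:ℝ) - s) / n) / n
      = (((n:ℝ)+1)*r*((n:ℝ)-r) + ((n:ℝ)+1)*s*((n:ℝ)-s) + 2*(r:ℝ)*((n:ℝ)-s)) / (2*(n:ℝ)^2) := by
    field_simp
  rw [eq, le_div_iff₀ (by positivity)]
  linarith [key]

lemma suAux_classify (n r : ℕ) (hn : 3 ≤ n) (hr : 1 ≤ r) (hr2 : r ≤ n - 1)
    (h : suCasimir n (suFundWeight n r) < 1) :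
    r = 1 ∨ r = n - 1 ∨ r = 2 ∨ r = n - 2 ∨
      ((n = 6 ∨ n = 7) ∧ (r = 3 ∨ r = n - 3)) := by
  have hn0 : 0 < n := by omega
  rw [suAux_cas_w n r hn0 (by omega)] at h
  set m := n - r with hm
  have hrm : r + m = n := by omega
  have hm1 : 1 ≤ m := by omega
  have hcast : ((n:ℝ) - r) = (m:ℝ) := by
    push_cast [hm, Nat.cast_sub (show r ≤ n by omega)]; ring
  rw [hcast, div_lt_one (by positivity)] at h
  have h37 : 3 ≤ r → 3 ≤ m → n ≤ 7 := by
    intro h3r h3m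
    by_contra h8
    push_neg at h8
    have h8R : (8:ℝ) ≤ n := by exact_mod_cast h8
    have h3rR : (3:ℝ) ≤ r := by exact_mod_cast h3r
    have h3mR : (3:ℝ) ≤ m := by exact_mod_cast h3m
    have hrmR : (r:ℝ) + m = n := by exact_mod_cast hrm
    nlinarith [mul_nonneg (sub_nonneg.2 h3rR) (sub_nonneg.2 h3mR), h]
  omega

lemma suAux_sum_extract (n : ℕ) (F : Finset ℕ) (c : ℕ → ℕ) (r : ℕ) (hr : r ∈ F)
    (h1 : 1 ≤ c r) :
    ∑ t ∈ F, c t • suFundWeight n t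
      = suFundWeight n r
        + ∑ t ∈ F, (if t = r then c t - 1 else c t) • suFundWeight n t := by
  rw [← Finset.add_sum_erase F _ hr, ← Finset.add_sum_erase F
    (fun t => (if t = r then c t - 1 else c t) • suFundWeight n t) hr]
  have e : ∑ t ∈ F.erase r, (if t = r then c t - 1 else c t) • suFundWeight n t
      = ∑ t ∈ F.erase r, c t • suFundWeight n t := by
    refine Finset.sum_congr rfl fun t ht => ?_
    rw [if_neg (Finset.ne_of_mem_erase ht)]
  rw [e, if_pos rfl, ← add_assoc]
  congr 1
  have : c r = (c r - 1) + 1 := by omega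
  rw [this, add_smul, one_smul, add_comm]
  simp

lemma suAux_sum_dec (F : Finset ℕ) (c : ℕ → ℕ) (r : ℕ) (hr : r ∈ F) (h1 : 1 ≤ c r) :
    ∑ t ∈ F, (if t = r then c t - 1 else c t) = (∑ t ∈ F, c t) - 1 := by
  rw [← Finset.add_sum_erase F _ hr, ← Finset.add_sum_erase F c hr, if_pos rfl]
  have e : ∑ t ∈ F.erase r, (if t = r then c t - 1 else c t)
      = ∑ t ∈ F.erase r, c t := by
    refine Finset.sum_congr rfl fun t ht => ?_
    rw [if_neg (Finset.ne_of_mem_erase ht)]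
  rw [e]
  omega

lemma suAux_exists_pos (F : Finset ℕ) (c : ℕ → ℕ) (h : 1 ≤ ∑ t ∈ F, c t) :
    ∃ r ∈ F, 1 ≤ c r := by
  by_contra hc
  push_neg at hc
  have : ∑ t ∈ F, c t = 0 := Finset.sum_eq_zero fun t ht => by
    have := hc t ht; omega
  omega

end Aux

/-- If `λ = Σ_{r=1}^{n−1} a_r ω_r` is a dominant weight of `SU(n)`, `n ≥ 3`, whose Casimir
eigenvalue (with respect to the negative Killing form inner ℝ product) satisfies
`Cas_λ < 1`, then `λ ∈ {0, ω₁, ω_{n−1}, ω₂, ω_{n−2}}`, together with `{ω₃, ω_{n−3}}` in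
the cases `n = 6, 7`. -/
theorem suCasimir_subcritical_classification (n : ℕ) (hn : 3 ≤ n) (a : ℕ → ℕ)
    (lam : EuclideanSpace ℝ (Fin n))
    (hlam : lam = ∑ r ∈ Finset.Icc 1 (n - 1), a r • suFundWeight n r)
    (h : suCasimir n lam < 1) :
    lam = 0 ∨ lam = suFundWeight n 1 ∨ lam = suFundWeight n (n - 1) ∨
      lam = suFundWeight n 2 ∨ lam = suFundWeight n (n - 2) ∨
      ((n = 6 ∨ n = 7) ∧ (lam = suFundWeight n 3 ∨ lam = suFundWeight n (n - 3))) := by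
  have hn0 : 0 < n := by omega
  set F := Finset.Icc 1 (n - 1) with hF
  rcases Nat.lt_or_ge (∑ t ∈ F, a t) 1 with hS | hS
  · -- λ = 0
    left
    rw [hlam]
    refine Finset.sum_eq_zero fun t ht => ?_
    have := Finset.sum_eq_zero_iff.1 (by omega : ∑ t ∈ F, a t = 0) t ht
    rw [this, zero_smul]
  · obtain ⟨r, hrF, hr1⟩ := suAux_exists_pos F a hS
    have hrlo : 1 ≤ r := (Finset.mem_Icc.1 hrF).1
    have hrhi : r ≤ n - 1 := (Finset.mem_Icc.1 hrF).2
    have hsplit : lam = suFundWeight n r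
        + ∑ t ∈ F, (if t = r then a t - 1 else a t) • suFundWeight n t := by
      rw [hlam]; exact suAux_sum_extract n F a r hrF hr1
    have hsum1 : ∑ t ∈ F, (if t = r then a t - 1 else a t) = (∑ t ∈ F, a t) - 1 :=
      suAux_sum_dec F a r hrF hr1
    rcases Nat.lt_or_ge (∑ t ∈ F, (if t = r then a t - 1 else a t)) 1 with hS1 | hS1
    · -- λ = ω_r
      have hμ0 : ∑ t ∈ F, (if t = r then a t - 1 else a t) • suFundWeight n t = 0 := by
        refine Finset.sum_eq_zero fun t ht => ?_
        have := Finset.sum_eq_zero_iff.1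
          (by omega : ∑ t ∈ F, (if t = r then a t - 1 else a t) = 0) t ht
        rw [this, zero_smul]
      have hlr : lam = suFundWeight n r := by rw [hsplit, hμ0, add_zero]
      have hcas : suCasimir n (suFundWeight n r) < 1 := by rw [← hlr]; exact h
      rcases suAux_classify n r hn hrlo hrhi hcas with hc | hc | hc | hc | ⟨hc6, hc⟩
      · right; left; rw [hlr, hc]
      · right; right; left; rw [hlr, hc]
      · right; right; right; left; rw [hlr, hc]
      · right; right; right; right; left; rw [hlr, hc]
      · right; right; right; right; right
        refine ⟨hc6, ?_⟩
        rcases hc with hc | hc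
        · left; rw [hlr, hc]
        · right; rw [hlr, hc]
    · -- at least two fundamental weights: contradiction
      exfalso
      obtain ⟨s, hsF, hs1⟩ := suAux_exists_pos F _ hS1
      have hslo : 1 ≤ s := (Finset.mem_Icc.1 hsF).1
      have hshi : s ≤ n - 1 := (Finset.mem_Icc.1 hsF).2
      set a1 : ℕ → ℕ := fun t => if t = r then a t - 1 else a t with ha1
      set a2 : ℕ → ℕ := fun t => if t = s then a1 t - 1 else a1 t with ha2
      have hsplit2 : ∑ t ∈ F, a1 t • suFundWeight n t
          = suFundWeight n s + ∑ t ∈ F, a2 t • suFundWeight n t :=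
        suAux_sum_extract n F a1 s hsF hs1
      set μ := ∑ t ∈ F, a2 t • suFundWeight n t with hμ
      have hlam2 : lam = suFundWeight n r + (suFundWeight n s + μ) := by
        rw [hsplit, hsplit2]
      have hrn : r ≤ n := by omega
      have hsn : s ≤ n := by omega
      -- expand the Casimir
      have hcas : suCasimir n lam
          = suCasimir n (suFundWeight n r) + suCasimir n (suFundWeight n s)
            + (inner ℝ (suFundWeight n r) (suFundWeight n s) : ℝ) / n
            + suCasimir n μ
            + (inner ℝ (suFundWeight n s) μ : ℝ) / n
            + (inner ℝ (suFundWeight n r) μ : ℝ) / n := by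
        rw [hlam2, suAux_cas_add, suAux_cas_add, inner_add_right, add_div]
        ring
      have h1 : 0 ≤ suCasimir n μ := suAux_cas_sum_nonneg n hn0 a2
      have hnRpos : (0:ℝ) < n := by exact_mod_cast hn0
      have h2 : 0 ≤ (inner ℝ (suFundWeight n s) μ : ℝ) / n :=
        div_nonneg (suAux_inner_w_sum_nonneg n hn0 a2 s hsn) (le_of_lt hnRpos)
      have h3 : 0 ≤ (inner ℝ (suFundWeight n r) μ : ℝ) / n :=
        div_nonneg (suAux_inner_w_sum_nonneg n hn0 a2 r hrn) (le_of_lt hnRpos)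
      have hpair : (1:ℝ) ≤ suCasimir n (suFundWeight n r) + suCasimir n (suFundWeight n s)
          + (inner ℝ (suFundWeight n r) (suFundWeight n s) : ℝ) / n := by
        rcases le_total r s with hrs | hrs
        · exact suAux_pair_bound n r s hn hrlo hrs hshi
        · have := suAux_pair_bound n s r hn hslo hrs hrhi
          rw [real_inner_comm] at this
          linarith
      linarith
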